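/- arXiv:1302.2474 — 5 statements merged into one kernel-verified Lean document; each statement's English description precedes it below -/
import Mathlib

section
/- Let v ≥ 0 be a real number and let n ∈ ℕ₀. Then (v)_n / n! ≤ (1+n)^v. -/
/-- The Pochhammer symbol `(x)_n = x (x+1) ⋯ (x+n-1)` for real `x`. -/
noncomputable def pochR (x : ℝ) (n : ℕ) : ℝ := ∏ i ∈ Finset.range n, (x + i)

/-!
The ratio of consecutive terms of `(v)_n / n!` is `(v + n) / (n + 1) = 1 + (v - 1) / (n + 1)`,
while that of `(1 + n)^v` is `(1 + 1 / (n + 1))^v`. A Bernoulli-type inequality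
`1 + (v - 1) s ≤ (1 + s)^v` compares the two ratios, and the bound follows by induction on `n`.
-/

theorem pochR_succ (x : ℝ) (n : ℕ) : pochR x (n + 1) = pochR x n * (x + n) :=
  Finset.prod_range_succ _ n

theorem pochR_div_factorial_succ (x : ℝ) (n : ℕ) :
    pochR x (n + 1) / (n + 1).factorial =
      pochR x n / n.factorial * (1 + (x - 1) / (n + 1)) := by
  rw [pochR_succ, Nat.factorial_succ]
  push_cast
  field_simp
  ring

theorem one_add_sub_one_mul_le_rpow_one_add {s v : ℝ} (hs : 0 ≤ s) (hv : 0 ≤ v) :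
    1 + (v - 1) * s ≤ (1 + s) ^ v := by
  rcases le_total v 1 with hv1 | hv1
  · calc 1 + (v - 1) * s ≤ 1 := by nlinarith
      _ ≤ (1 + s) ^ v := Real.one_le_rpow (by linarith) hv
  · calc 1 + (v - 1) * s ≤ 1 + v * s := by nlinarith
      _ ≤ (1 + s) ^ v := one_add_mul_self_le_rpow_one_add (by linarith) hv1

theorem pochR_div_factorial_le (v : ℝ) (hv : 0 ≤ v) (n : ℕ) :
    pochR v n / n.factorial ≤ (1 + (n : ℝ)) ^ v := by
  induction n with
  | zero => simp [pochR]
  | succ n ih =>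
    have hn : (0 : ℝ) ≤ n := n.cast_nonneg
    have hratio : 1 + (v - 1) / (n + 1) ≤ (1 + 1 / (n + 1)) ^ v := by
      simpa only [div_eq_mul_one_div (v - 1)] using
        one_add_sub_one_mul_le_rpow_one_add (s := 1 / (n + 1)) (by positivity) hv
    have hratio_nonneg : 0 ≤ 1 + (v - 1) / (n + 1) := by
      rw [one_add_div (by positivity)]
      exact div_nonneg (by linarith) (by positivity)
    calc pochR v (n + 1) / (n + 1).factorial
        = pochR v n / n.factorial * (1 + (v - 1) / (n + 1)) := pochR_div_factorial_succ v n
      _ ≤ (1 + n) ^ v * (1 + 1 / (n + 1)) ^ v :=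
        mul_le_mul ih hratio hratio_nonneg (by positivity)
      _ = ((1 + n) * (1 + 1 / (n + 1))) ^ v := (Real.mul_rpow (by positivity) (by positivity)).symm
      _ = (1 + ((n + 1 : ℕ) : ℝ)) ^ v := by
        congr 1
        push_cast
        field_simp
        ring
end

section
/- Let w > −1 be a real number and let k, n ∈ ℕ₀ with k ≤ n. Then (n+w)_k ≤ max{1, 2^w} · (n+k)! / n!. -/
private lemma factRatio (n k : ℕ) :
    ((n + k).factorial / n.factorial : ℝ) = ∏ i ∈ Finset.range k, ((n : ℝ) + 1 + i) := by
  induction k with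
  | zero => simp [div_self (show (n.factorial:ℝ) ≠ 0 by positivity)]
  | succ k ih =>
      rw [Finset.prod_range_succ, ← ih]
      have h : (n + (k + 1)).factorial = (n + k + 1) * (n + k).factorial := by
        rw [← Nat.add_assoc]; exact Nat.factorial_succ _
      rw [h]
      have hfac : (n.factorial : ℝ) ≠ 0 := by positivity
      push_cast
      field_simp
      ring

private lemma shiftProd (n k : ℕ) :
    ((n : ℝ) + 1) * ∏ i ∈ Finset.range k, ((n : ℝ) + 2 + i)
      = ((n : ℝ) + k + 1) * ∏ i ∈ Finset.range k, ((n : ℝ) + 1 + i) := by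
  induction k with
  | zero => simp
  | succ k ih =>
      rw [Finset.prod_range_succ, Finset.prod_range_succ, ← mul_assoc, ih]
      push_cast
      ring

private lemma bern_step (w : ℝ) (hw : 2 ≤ w) (n k : ℕ) :
    ∏ i ∈ Finset.range k, ((n : ℝ) + w + i)
      ≤ (((n : ℝ) + k + 1) / ((n : ℝ) + 1)) ^ (w - 1)
          * ∏ i ∈ Finset.range k, ((n : ℝ) + 1 + i) := by
  have hn1 : (0 : ℝ) < (n : ℝ) + 1 := by positivity
  induction k with
  | zero => simp [div_self hn1.ne', Real.one_rpow]
  | succ k ih =>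
      have hnk1 : (0 : ℝ) < (n : ℝ) + k + 1 := by positivity
      have hB : (0 : ℝ) ≤ ∏ i ∈ Finset.range k, ((n : ℝ) + 1 + i) := by
        apply Finset.prod_nonneg
        intro i _
        positivity
      have hfac : (0 : ℝ) ≤ (n : ℝ) + w + k := by linarith
      rw [Finset.prod_range_succ, Finset.prod_range_succ]
      have step1 : (∏ i ∈ Finset.range k, ((n : ℝ) + w + i)) * ((n : ℝ) + w + k)
          ≤ ((((n : ℝ) + k + 1) / ((n : ℝ) + 1)) ^ (w - 1)
              * ∏ i ∈ Finset.range k, ((n : ℝ) + 1 + i)) * ((n : ℝ) + w + k) :=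
        mul_le_mul_of_nonneg_right ih hfac
      refine step1.trans ?_
      -- key pointwise Bernoulli inequality
      have hbern : (n : ℝ) + w + k
          ≤ (((n : ℝ) + k + 2) / ((n : ℝ) + k + 1)) ^ (w - 1) * ((n : ℝ) + k + 1) := by
        have hs : (-1 : ℝ) ≤ 1 / ((n : ℝ) + k + 1) := by
          have : (0:ℝ) ≤ 1 / ((n : ℝ) + k + 1) := by positivity
          linarith
        have hp : (1 : ℝ) ≤ w - 1 := by linarith
        have h := one_add_mul_self_le_rpow_one_add hs hp
        have hrw : (1 : ℝ) + 1 / ((n : ℝ) + k + 1)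
            = ((n : ℝ) + k + 2) / ((n : ℝ) + k + 1) := by
          field_simp
          ring
        rw [hrw] at h
        have := mul_le_mul_of_nonneg_right h hnk1.le
        calc (n : ℝ) + w + k
            = (1 + (w - 1) * (1 / ((n : ℝ) + k + 1))) * ((n : ℝ) + k + 1) := by
              field_simp; ring
          _ ≤ (((n : ℝ) + k + 2) / ((n : ℝ) + k + 1)) ^ (w - 1) * ((n : ℝ) + k + 1) := this
      have hsplit : (((n : ℝ) + ↑(k + 1) + 1) / ((n : ℝ) + 1)) ^ (w - 1)
          = (((n : ℝ) + k + 1) / ((n : ℝ) + 1)) ^ (w - 1)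
              * (((n : ℝ) + k + 2) / ((n : ℝ) + k + 1)) ^ (w - 1) := by
        rw [← Real.mul_rpow (by positivity) (by positivity)]
        congr 1
        push_cast
        field_simp
        ring
      rw [hsplit]
      have hr1 : (0 : ℝ) ≤ (((n : ℝ) + k + 1) / ((n : ℝ) + 1)) ^ (w - 1) := by positivity
      calc (((n : ℝ) + k + 1) / ((n : ℝ) + 1)) ^ (w - 1)
              * (∏ i ∈ Finset.range k, ((n : ℝ) + 1 + i)) * ((n : ℝ) + w + k)
          ≤ (((n : ℝ) + k + 1) / ((n : ℝ) + 1)) ^ (w - 1)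
              * (∏ i ∈ Finset.range k, ((n : ℝ) + 1 + i))
              * ((((n : ℝ) + k + 2) / ((n : ℝ) + k + 1)) ^ (w - 1) * ((n : ℝ) + k + 1)) := by
            apply mul_le_mul_of_nonneg_left hbern
            exact mul_nonneg hr1 hB
        _ = (((n : ℝ) + k + 1) / ((n : ℝ) + 1)) ^ (w - 1)
              * (((n : ℝ) + k + 2) / ((n : ℝ) + k + 1)) ^ (w - 1)
              * ((∏ i ∈ Finset.range k, ((n : ℝ) + 1 + i)) * ((n : ℝ) + 1 + k)) := by
            ring

theorem pochR_shift_upper_bound (w : ℝ) (hw : -1 < w) (k n : ℕ) (hkn : k ≤ n) :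
    pochR ((n : ℝ) + w) k ≤ max 1 ((2 : ℝ) ^ w) * ((n + k).factorial / n.factorial : ℝ) := by
  have hmax1 : (1 : ℝ) ≤ max 1 ((2 : ℝ) ^ w) := le_max_left _ _
  have hB : (0 : ℝ) ≤ ∏ i ∈ Finset.range k, ((n : ℝ) + 1 + i) := by
    apply Finset.prod_nonneg; intro i _; positivity
  rw [factRatio]
  unfold pochR
  simp only [add_assoc] -- align (n + w + i) association? maybe not needed
  rcases Nat.eq_zero_or_pos k with hk0 | hkpos
  · subst hk0
    simp [hmax1]
  -- now k ≥ 1 hence n ≥ 1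
  have hn1 : 1 ≤ n := le_trans hkpos hkn
  have hnk2 : ((n : ℝ) + k + 1) ≤ 2 * ((n : ℝ) + 1) := by
    have : (k : ℝ) ≤ (n : ℝ) := by exact_mod_cast hkn
    linarith
  rcases le_or_gt w 1 with hw1 | hw1
  · -- w ≤ 1 : compare factorwise with n+1+i
    have hLB : ∏ i ∈ Finset.range k, ((n : ℝ) + (w + i))
        ≤ ∏ i ∈ Finset.range k, ((n : ℝ) + (1 + i)) := by
      apply Finset.prod_le_prod
      · intro i _
        have : (1 : ℝ) ≤ (n : ℝ) := by exact_mod_cast hn1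
        have : (0 : ℝ) ≤ (i : ℝ) := by positivity
        linarith
      · intro i _; linarith
    refine hLB.trans ?_
    calc ∏ i ∈ Finset.range k, ((n : ℝ) + (1 + i))
        = 1 * ∏ i ∈ Finset.range k, ((n : ℝ) + (1 + i)) := by rw [one_mul]
      _ ≤ max 1 ((2 : ℝ) ^ w) * ∏ i ∈ Finset.range k, ((n : ℝ) + (1 + i)) := by
          apply mul_le_mul_of_nonneg_right hmax1
          simpa [add_assoc] using hB
  rcases le_or_gt w 2 with hw2 | hw2
  · -- 1 < w ≤ 2 : compare factorwise with n+2+i, then telescope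
    have h2w : (2 : ℝ) ≤ (2 : ℝ) ^ w := by
      calc (2 : ℝ) = (2 : ℝ) ^ (1 : ℝ) := by rw [Real.rpow_one]
        _ ≤ (2 : ℝ) ^ w := Real.rpow_le_rpow_of_exponent_le one_le_two hw1.le
    have hLB : ∏ i ∈ Finset.range k, ((n : ℝ) + (w + i))
        ≤ ∏ i ∈ Finset.range k, ((n : ℝ) + 2 + i) := by
      apply Finset.prod_le_prod
      · intro i _
        have : (1 : ℝ) ≤ (n : ℝ) := by exact_mod_cast hn1
        have : (0 : ℝ) ≤ (i : ℝ) := by positivity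
        linarith
      · intro i _; linarith
    refine hLB.trans ?_
    have htel := shiftProd n k
    have hpos : (0 : ℝ) < (n : ℝ) + 1 := by positivity
    have : ∏ i ∈ Finset.range k, ((n : ℝ) + 2 + i)
        = (((n : ℝ) + k + 1) / ((n : ℝ) + 1)) * ∏ i ∈ Finset.range k, ((n : ℝ) + 1 + i) := by
      field_simp
      linarith [htel]
    rw [this]
    have h1 : (((n : ℝ) + k + 1) / ((n : ℝ) + 1)) ≤ 2 := by
      rw [div_le_iff₀ hpos]; linarith
    have h2 : (2 : ℝ) ≤ max 1 ((2 : ℝ) ^ w) := le_trans h2w (le_max_right _ _)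
    have := mul_le_mul_of_nonneg_right (le_trans h1 h2) hB
    simpa [add_assoc] using this
  · -- w > 2 : Bernoulli telescoping
    have h := bern_step w hw2.le n k
    have hpos : (0 : ℝ) < (n : ℝ) + 1 := by positivity
    have hratio : (((n : ℝ) + k + 1) / ((n : ℝ) + 1)) ^ (w - 1) ≤ (2 : ℝ) ^ w := by
      calc (((n : ℝ) + k + 1) / ((n : ℝ) + 1)) ^ (w - 1)
          ≤ (2 : ℝ) ^ (w - 1) := by
            apply Real.rpow_le_rpow (by positivity) _ (by linarith)
            rw [div_le_iff₀ hpos]; linarith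
        _ ≤ (2 : ℝ) ^ w := Real.rpow_le_rpow_of_exponent_le one_le_two (by linarith)
    have hfinal : (((n : ℝ) + k + 1) / ((n : ℝ) + 1)) ^ (w - 1)
        ≤ max 1 ((2 : ℝ) ^ w) := le_trans hratio (le_max_right _ _)
    have := mul_le_mul_of_nonneg_right hfinal hB
    have h' := le_trans h this
    simpa [add_assoc] using h'
end

section
/- Let z ∈ ℂ and let k, n ∈ ℕ₀ with k ≤ n. Then |(k+z)_{n−k}| ≤ (1+n)^{|z|} · n! / k!. -/
/-- The Pochhammer symbol `(z)_n = z (z+1) ⋯ (z+n-1)`. -/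
noncomputable def poch (z : ℂ) (n : ℕ) : ℂ := ∏ i ∈ Finset.range n, (z + i)

/-!
With `t = ‖z‖`, each factor satisfies `‖k + i + z‖ ≤ k + i + t`, and for real `x ≥ 0`
`x + t ≤ (x + 1) * ((x + 2) / (x + 1)) ^ t`
(monotonicity when `t ≤ 1`, Bernoulli's inequality when `t ≥ 1`). Taking the product over
`x = k, …, n - 1`, the ratios telescope and the bound becomes `n! / k! * ((n + 1) / (k + 1)) ^ t`.
-/

open Finset

lemma norm_poch_natCast_add_le (z : ℂ) (k d : ℕ) :
    ‖poch ((k : ℂ) + z) d‖ ≤ ∏ i ∈ range d, ((k : ℝ) + i + ‖z‖) := by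
  rw [poch, norm_prod]
  refine prod_le_prod (fun _ _ => norm_nonneg _) fun i _ => ?_
  calc ‖(k : ℂ) + z + i‖ = ‖((k + i : ℕ) : ℂ) + z‖ := by push_cast; ring_nf
    _ ≤ ‖((k + i : ℕ) : ℂ)‖ + ‖z‖ := norm_add_le _ _
    _ = (k : ℝ) + i + ‖z‖ := by rw [Complex.norm_natCast]; push_cast; rfl

lemma add_mul_rpow_le_mul_rpow_add_two {x t : ℝ} (hx : 0 ≤ x) (ht : 0 ≤ t) :
    (x + t) * (x + 1) ^ t ≤ (x + 1) * (x + 2) ^ t := by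
  rcases le_total t 1 with ht1 | ht1
  · exact mul_le_mul (by linarith) (Real.rpow_le_rpow (by linarith) (by linarith) ht)
      (by positivity) (by linarith)
  · have hx1 : 0 < x + 1 := by linarith
    have bernoulli : 1 + t * (x + 1)⁻¹ ≤ (1 + (x + 1)⁻¹) ^ t :=
      one_add_mul_self_le_rpow_one_add (by linarith [inv_nonneg.2 hx1.le]) ht1
    have hsplit : (x + 2) ^ t = (x + 1) ^ t * (1 + (x + 1)⁻¹) ^ t := by
      rw [← Real.mul_rpow hx1.le (by positivity)]
      congr 1
      field_simp
      ring
    calc (x + t) * (x + 1) ^ t ≤ (x + 1) * (1 + t * (x + 1)⁻¹) * (x + 1) ^ t := by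
          gcongr
          field_simp
          linarith
      _ ≤ (x + 1) * (1 + (x + 1)⁻¹) ^ t * (x + 1) ^ t := by gcongr
      _ = (x + 1) * (x + 2) ^ t := by rw [hsplit]; ring

lemma prod_range_add_mul_rpow_le {x t : ℝ} (hx : 0 ≤ x) (ht : 0 ≤ t) (d : ℕ) :
    (∏ i ∈ range d, (x + i + t)) * (x + 1) ^ t ≤
      (∏ i ∈ range d, (x + i + 1)) * (x + d + 1) ^ t := by
  induction d with
  | zero => simp
  | succ d ih =>
    have hxd : 0 ≤ x + d := by positivity
    calc (∏ i ∈ range (d + 1), (x + i + t)) * (x + 1) ^ t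
        = (x + d + t) * ((∏ i ∈ range d, (x + i + t)) * (x + 1) ^ t) := by
          rw [prod_range_succ]; ring
      _ ≤ (x + d + t) * ((∏ i ∈ range d, (x + i + 1)) * (x + d + 1) ^ t) := by
          gcongr
      _ = (∏ i ∈ range d, (x + i + 1)) * ((x + d + t) * (x + d + 1) ^ t) := by ring
      _ ≤ (∏ i ∈ range d, (x + i + 1)) * ((x + d + 1) * (x + d + 2) ^ t) := by
          gcongr ?_ * ?_
          exact add_mul_rpow_le_mul_rpow_add_two hxd ht
      _ = (∏ i ∈ range (d + 1), (x + i + 1)) * (x + ↑(d + 1) + 1) ^ t := by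
          rw [prod_range_succ]; push_cast; ring_nf

lemma prod_range_natCast_add_add_one_eq_factorial_div (k d : ℕ) :
    ∏ i ∈ range d, ((k : ℝ) + i + 1) = ((k + d).factorial / k.factorial : ℝ) := by
  rw [eq_div_iff (by positivity), ← Nat.factorial_mul_ascFactorial, Nat.ascFactorial_eq_prod_range]
  push_cast
  rw [mul_comm]
  congr 1
  exact prod_congr rfl fun i _ => by ring

theorem poch_shift_abs_upper_bound (z : ℂ) (k n : ℕ) (hkn : k ≤ n) :
    ‖poch ((k : ℂ) + z) (n - k)‖ ≤
      (1 + (n : ℝ)) ^ ‖z‖ * (n.factorial / k.factorial : ℝ) := by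
  have hk : (0 : ℝ) ≤ k := k.cast_nonneg
  have hone : (1 : ℝ) ≤ (k + 1) ^ ‖z‖ := Real.one_le_rpow (by linarith) (norm_nonneg z)
  have hprod := prod_range_add_mul_rpow_le hk (norm_nonneg z) (n - k)
  rw [prod_range_natCast_add_add_one_eq_factorial_div, Nat.add_sub_cancel' hkn, Nat.cast_sub hkn,
    add_sub_cancel, add_comm (n : ℝ)] at hprod
  calc ‖poch ((k : ℂ) + z) (n - k)‖ ≤ ∏ i ∈ range (n - k), ((k : ℝ) + i + ‖z‖) :=
        norm_poch_natCast_add_le z k (n - k)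
    _ ≤ (∏ i ∈ range (n - k), ((k : ℝ) + i + ‖z‖)) * (k + 1) ^ ‖z‖ :=
        le_mul_of_one_le_right (prod_nonneg fun i _ => by positivity) hone
    _ ≤ (1 + (n : ℝ)) ^ ‖z‖ * (n.factorial / k.factorial : ℝ) := hprod.trans_eq (mul_comm _ _)
end

section
/- Let x > 0 be a real number and let k ∈ ℕ₀. Then (k+x−1)_k ≥ min{x/2, 1/6} · (2k)! / k!. -/
lemma pochR_add (y : ℝ) (m n : ℕ) : pochR y (m + n) = pochR y m * pochR (y + m) n := by
  simp only [pochR, Finset.prod_range_add, Nat.cast_add, add_assoc]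

lemma pochR_two (y : ℝ) : pochR y 2 = y * (y + 1) := by
  simp [pochR, Finset.prod_range_succ]

lemma pochR_one_eq_factorial (n : ℕ) : pochR 1 n = n.factorial := by
  rw [← Finset.prod_range_add_one_eq_factorial, pochR]
  push_cast
  simp only [add_comm]

lemma pochR_nonneg {y : ℝ} (hy : 0 ≤ y) (n : ℕ) : 0 ≤ pochR y n :=
  Finset.prod_nonneg fun _ _ => by positivity

lemma pochR_mono {y z : ℝ} (hy : 0 ≤ y) (hyz : y ≤ z) (n : ℕ) : pochR y n ≤ pochR z n :=
  Finset.prod_le_prod (fun _ _ => by positivity) fun _ _ => by linarith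

lemma factorial_two_mul_div_factorial (k : ℕ) :
    ((2 * k).factorial / k.factorial : ℝ) = pochR (k + 1) k := by
  have hk : (k.factorial : ℝ) ≠ 0 := by exact_mod_cast k.factorial_ne_zero
  rw [two_mul, ← pochR_one_eq_factorial, ← pochR_one_eq_factorial, pochR_add, add_comm (1 : ℝ),
    mul_div_cancel_left₀ _ (by rwa [pochR_one_eq_factorial])]

theorem pochR_lower_bound_central (x : ℝ) (hx : 0 < x) (k : ℕ) :
    min (x / 2) (1 / 6) * ((2 * k).factorial / k.factorial : ℝ) ≤
      pochR ((k : ℝ) + x - 1) k := by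
  set c := min (x / 2) (1 / 6)
  have hc_half : c ≤ x / 2 := min_le_left _ _
  have hc_sixth : c ≤ 1 / 6 := min_le_right _ _
  have hc : 0 ≤ c := le_min (by positivity) (by norm_num)
  rw [factorial_two_mul_div_factorial]
  match k with
  | 0 => simp only [pochR, Finset.prod_range_zero]; linarith
  | 1 => simp only [pochR, Finset.prod_range_one]; push_cast; linarith
  | m + 2 =>
    have hsplit_ratio :
        pochR ((m + 2 : ℕ) + 1) (m + 2) = pochR (m + 3) m * pochR (2 * m + 3) 2 := by
      rw [pochR_add]; push_cast; ring_nf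
    have hsplit_poch :
        pochR ((m + 2 : ℕ) + x - 1) (m + 2) = pochR (m + 1 + x) 2 * pochR (m + 3 + x) m := by
      rw [add_comm m 2, pochR_add]; push_cast; ring_nf
    have hpaired : pochR (m + 3) m ≤ pochR (m + 3 + x) m :=
      pochR_mono (by positivity) (by linarith) m
    have hlast_two : c * pochR (2 * m + 3) 2 ≤ pochR (m + 1 + x) 2 := by
      rw [pochR_two, pochR_two]
      have hm : (0 : ℝ) ≤ m := m.cast_nonneg
      have hpos : (0 : ℝ) ≤ (2 * m + 3) * (2 * m + 3 + 1) := by positivity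
      nlinarith [mul_le_mul_of_nonneg_right hc_sixth hpos]
    rw [hsplit_ratio, hsplit_poch]
    calc c * (pochR (m + 3) m * pochR (2 * m + 3) 2)
        = pochR (m + 3) m * (c * pochR (2 * m + 3) 2) := by ring
      _ ≤ pochR (m + 3 + x) m * pochR (m + 1 + x) 2 :=
        mul_le_mul hpaired hlast_two (mul_nonneg hc (pochR_nonneg (by positivity) 2))
          (pochR_nonneg (by positivity) m)
      _ = _ := mul_comm _ _
end

section
/- Let x > 0 be a real number and let k, n ∈ ℕ₀ with k ≤ n. Then (2k+x)_{n−k} ≥ min{x, 1} · (1/(1+n)) · (n+k)! / (2k)!. -/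
/-!
Peel off the first factor of `(2k+x)_{n-k}`: it is at least `min x 1 · (2k+1)`, while the remaining
factors dominate those of `(2k+1)_{n-k-1} = (n+k-1)!/(2k)!`. Restoring the missing factor `n+k` of
`(n+k)!` costs at most the factor `(n+k)/(2k+1) ≤ 1+n`.
-/

open scoped Nat

namespace pochR

@[simp]
lemma zero_right (z : ℝ) : pochR z 0 = 1 := by
  simp [pochR]

lemma succ_right (z : ℝ) (m : ℕ) : pochR z (m + 1) = z * pochR (z + 1) m := by
  rw [pochR, Finset.prod_range_succ', pochR, mul_comm]
  push_cast
  simp only [add_zero, add_assoc, add_comm (1 : ℝ)]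

lemma nonneg {z : ℝ} (hz : 0 ≤ z) (m : ℕ) : 0 ≤ pochR z m :=
  Finset.prod_nonneg fun _ _ => by positivity

lemma mono {z y : ℝ} (hz : 0 ≤ z) (hzy : z ≤ y) (m : ℕ) : pochR z m ≤ pochR y m :=
  Finset.prod_le_prod (fun _ _ => by positivity) fun _ _ => by linarith

lemma natCast (a m : ℕ) : pochR a m = a.ascFactorial m := by
  simp [pochR, Nat.ascFactorial_eq_prod_range]

lemma natCast_add_one (a m : ℕ) : pochR (a + 1) m = ((a + m)! / a ! : ℝ) := by
  rw [eq_div_iff (by positivity), ← Nat.cast_add_one, natCast, mul_comm]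
  exact_mod_cast Nat.factorial_mul_ascFactorial a m

lemma min_mul_le_succ_right {a x : ℝ} (ha : 0 ≤ a) (hx : 0 ≤ x) (m : ℕ) :
    min x 1 * (a + 1) * pochR (a + 1) m ≤ pochR (a + x) (m + 1) := by
  have hfirst : min x 1 * (a + 1) ≤ a + x := by
    rcases le_total x 1 with h | h
    · rw [min_eq_left h]; nlinarith
    · rw [min_eq_right h]; linarith
  rw [succ_right]
  exact mul_le_mul hfirst (mono (by positivity) (by linarith) m) (nonneg (by positivity) m)
    (by positivity)

end pochR

theorem pochR_lower_bound_shifted (x : ℝ) (hx : 0 < x) (k n : ℕ) (hkn : k ≤ n) :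
    min x 1 * (1 / (1 + (n : ℝ))) * ((n + k).factorial / (2 * k).factorial : ℝ) ≤
      pochR (2 * (k : ℝ) + x) (n - k) := by
  obtain ⟨m, rfl⟩ := Nat.exists_eq_add_of_le hkn
  rw [Nat.add_sub_cancel_left]
  rcases m with _ | j
  · have : min x 1 * (1 / (1 + (k : ℝ))) ≤ 1 := by
      rw [mul_one_div, div_le_one (by positivity)]
      linarith [min_le_right x 1, (k.cast_nonneg : (0 : ℝ) ≤ k)]
    simpa [← two_mul, div_self (by positivity : ((2 * k)! : ℝ) ≠ 0)] using this
  have hfac : ((k + (j + 1) + k)! : ℝ) = (2 * k + j + 1) * (2 * k + j)! := by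
    rw [show k + (j + 1) + k = 2 * k + j + 1 by ring, Nat.factorial_succ]
    push_cast; ring
  have hratio : (2 * k + j + 1 : ℝ) / (1 + (k + (j + 1) : ℕ)) ≤ 2 * k + 1 := by
    rw [div_le_iff₀ (by positivity)]
    push_cast
    nlinarith [(k.cast_nonneg : (0 : ℝ) ≤ k), (j.cast_nonneg : (0 : ℝ) ≤ j)]
  calc min x 1 * (1 / (1 + ((k + (j + 1) : ℕ) : ℝ))) * ((k + (j + 1) + k)! / (2 * k)! : ℝ)
      = min x 1 * ((2 * k + j + 1) / (1 + ((k + (j + 1) : ℕ) : ℝ))) *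
          ((2 * k + j)! / (2 * k)! : ℝ) := by rw [hfac]; ring
    _ ≤ min x 1 * (2 * (k : ℝ) + 1) * pochR ((2 * k : ℕ) + 1) j := by
      rw [pochR.natCast_add_one]
      gcongr
    _ ≤ pochR (2 * (k : ℝ) + x) (j + 1) := by
      simpa using pochR.min_mul_le_succ_right (a := (2 * k : ℕ)) (by positivity) hx.le j
end
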